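/- For n ≥ 1, the trace distance between the two parity-conditioned ensemble states σ₀ and σ₁ equals (√2/2)^n: D(σ₀, σ₁) = (1/2)·tr |σ₀ − σ₁| = (1/√2)^n. -/

import Mathlib

open Matrix Finset ComplexOrder

/-- Parity of a bit string. -/
def parity {n : ℕ} (ν : Fin n → ZMod 2) : ZMod 2 := ∑ l, ν l

/-- Tensor product of a family of one-qubit matrices, as a matrix indexed by bit strings. -/
def tens {n : ℕ} (A : Fin n → Matrix (ZMod 2) (ZMod 2) ℂ) :
    Matrix (Fin n → ZMod 2) (Fin n → ZMod 2) ℂ :=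
  Matrix.of fun x y => ∏ l, A l (x l) (y l)

/-- `P 0 = |0⟩⟨0|`, `P 1 = |+⟩⟨+|`. -/
noncomputable def projP (b : ZMod 2) : Matrix (ZMod 2) (ZMod 2) ℂ :=
  if b = 0 then !![1, 0; 0, 0] else (1 / 2 : ℂ) • !![1, 1; 1, 1]

/-- The parity-conditioned ensemble state `σ_b`. -/
noncomputable def sigma (n : ℕ) (b : ZMod 2) :
    Matrix (Fin n → ZMod 2) (Fin n → ZMod 2) ℂ :=
  (1 / 2 ^ (n - 1) : ℂ) •
    ∑ j ∈ Finset.univ.filter (fun j : Fin n → ZMod 2 => parity j = b),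
      tens (fun l => projP (j l))

/-- `|A|` is the positive semidefinite square root of `AᴴA`. -/
noncomputable def matAbs {m : Type*} [Fintype m] [DecidableEq m] (A : Matrix m m ℂ) :
    Matrix m m ℂ :=
  let hA := (Matrix.posSemidef_conjTranspose_mul_self A).1
  hA.eigenvectorUnitary.1 * diagonal ((↑) ∘ (√·) ∘ hA.eigenvalues) *
    (star hA.eigenvectorUnitary : Matrix m m ℂ)

/-- The trace norm `‖A‖_tr = tr |A|` (a real number). -/
noncomputable def traceNorm {m : Type*} [Fintype m] [DecidableEq m] (A : Matrix m m ℂ) : ℝ :=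
  (matAbs A).trace.re

/- ===== auxiliary ===== -/

lemma zmod2_cases (a : ZMod 2) : a = 0 ∨ a = 1 := by revert a; decide

lemma sum_zmod2 {M : Type*} [AddCommMonoid M] (f : ZMod 2 → M) : ∑ b, f b = f 0 + f 1 := by
  rw [show (univ : Finset (ZMod 2)) = {0, 1} by decide]
  rw [Finset.sum_insert (by decide), Finset.sum_singleton]

noncomputable def eps : ZMod 2 → ℂ := fun b => if b = 0 then 1 else -1

lemma eps_zero : eps 0 = 1 := rfl
lemma eps_one : eps 1 = -1 := by simp [eps]

lemma eps_add (a b : ZMod 2) : eps (a + b) = eps a * eps b := by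
  rcases zmod2_cases a with ha | ha <;> rcases zmod2_cases b with hb | hb <;>
    subst ha <;> subst hb <;> simp [eps, show (1:ZMod 2)+1 = 0 from by decide]

lemma eps_sum {ι : Type*} (s : Finset ι) (g : ι → ZMod 2) :
    eps (∑ i ∈ s, g i) = ∏ i ∈ s, eps (g i) := by
  induction s using Finset.cons_induction with
  | empty => simp [eps]
  | cons a s ha ih => rw [Finset.sum_cons, Finset.prod_cons, eps_add, ih]

noncomputable def D : Matrix (ZMod 2) (ZMod 2) ℂ := projP 0 - projP 1

lemma tens_mul {n : ℕ} (A B : Fin n → Matrix (ZMod 2) (ZMod 2) ℂ) :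
    tens A * tens B = tens (fun l => A l * B l) := by
  ext x y
  simp only [tens, Matrix.mul_apply, Matrix.of_apply]
  rw [Fintype.prod_sum (fun l b => A l (x l) b * B l b (y l))]
  exact Finset.sum_congr rfl fun z _ => (Finset.prod_mul_distrib).symm

lemma tens_one {n : ℕ} : tens (fun _ : Fin n => (1 : Matrix (ZMod 2) (ZMod 2) ℂ)) = 1 := by
  ext x y
  simp only [tens, Matrix.of_apply, Matrix.one_apply]
  rw [Finset.prod_boole]
  simp [funext_iff]

lemma tens_conjTranspose {n : ℕ} (A : Fin n → Matrix (ZMod 2) (ZMod 2) ℂ) :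
    (tens A)ᴴ = tens (fun l => (A l)ᴴ) := by
  ext x y
  simp only [tens, Matrix.conjTranspose_apply, Matrix.of_apply, star_prod]

lemma tens_smul_const {n : ℕ} (c : ℂ) (M : Matrix (ZMod 2) (ZMod 2) ℂ) :
    tens (fun _ : Fin n => c • M) = c ^ n • tens (fun _ => M) := by
  ext x y
  simp [tens, Finset.prod_mul_distrib, Finset.card_univ]

lemma D_00 : D 0 0 = 1 / 2 := by
  show (((!![1, 0; 0, 0] : Matrix (Fin 2) (Fin 2) ℂ) - (1 / 2 : ℂ) • (!![1, 1; 1, 1] : Matrix (Fin 2) (Fin 2) ℂ) :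
    Matrix (Fin 2) (Fin 2) ℂ)) (0 : Fin 2) (0 : Fin 2) = 1 / 2
  simp; norm_num

lemma D_01 : D 0 1 = -1 / 2 := by
  show (((!![1, 0; 0, 0] : Matrix (Fin 2) (Fin 2) ℂ) - (1 / 2 : ℂ) • (!![1, 1; 1, 1] : Matrix (Fin 2) (Fin 2) ℂ) :
    Matrix (Fin 2) (Fin 2) ℂ)) (0 : Fin 2) (1 : Fin 2) = -1 / 2
  simp; norm_num

lemma D_10 : D 1 0 = -1 / 2 := by
  show (((!![1, 0; 0, 0] : Matrix (Fin 2) (Fin 2) ℂ) - (1 / 2 : ℂ) • (!![1, 1; 1, 1] : Matrix (Fin 2) (Fin 2) ℂ) :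
    Matrix (Fin 2) (Fin 2) ℂ)) (1 : Fin 2) (0 : Fin 2) = -1 / 2
  simp; norm_num

lemma D_11 : D 1 1 = -1 / 2 := by
  show (((!![1, 0; 0, 0] : Matrix (Fin 2) (Fin 2) ℂ) - (1 / 2 : ℂ) • (!![1, 1; 1, 1] : Matrix (Fin 2) (Fin 2) ℂ) :
    Matrix (Fin 2) (Fin 2) ℂ)) (1 : Fin 2) (1 : Fin 2) = -1 / 2
  simp; norm_num

lemma D_herm : Dᴴ = D := by
  ext i j
  rcases zmod2_cases i with hi | hi <;> rcases zmod2_cases j with hj | hj <;>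
    subst hi <;> subst hj <;>
    simp [D_00, D_01, D_10, D_11, Matrix.conjTranspose_apply, Matrix.sub_apply]

lemma D_mul_D : D * D = (1 / 2 : ℂ) • 1 := by
  ext i j
  rw [Matrix.mul_apply, sum_zmod2]
  rcases zmod2_cases i with hi | hi <;> rcases zmod2_cases j with hj | hj <;>
    subst hi <;> subst hj <;>
    simp [D_00, D_01, D_10, D_11, Matrix.sub_apply, Matrix.one_apply] <;> norm_num

lemma sum_eps_tens (n : ℕ) :
    ∑ j : Fin n → ZMod 2, eps (parity j) • tens (fun l => projP (j l))
      = tens (fun _ => D) := by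
  ext x y
  simp only [Matrix.sum_apply, Matrix.smul_apply, tens, Matrix.of_apply, smul_eq_mul, parity]
  have h1 : ∀ j : Fin n → ZMod 2,
      eps (∑ l, j l) * ∏ l, projP (j l) (x l) (y l)
        = ∏ l, eps (j l) * projP (j l) (x l) (y l) := fun j => by
    rw [eps_sum, ← Finset.prod_mul_distrib]
  simp only [h1]
  rw [← Fintype.prod_sum (fun l b => eps b * projP b (x l) (y l))]
  refine Finset.prod_congr rfl fun l _ => ?_
  rw [sum_zmod2, eps_zero, eps_one]
  simp [D, Matrix.sub_apply]
  ring

lemma sigma_sub (n : ℕ) :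
    sigma n 0 - sigma n 1 = (1 / 2 ^ (n - 1) : ℂ) • tens (fun _ => D) := by
  rw [← sum_eps_tens n]
  unfold sigma
  rw [← smul_sub]
  congr 1
  rw [← Finset.sum_filter_add_sum_filter_not univ (fun j : Fin n → ZMod 2 => parity j = 0)]
  have hfil : Finset.univ.filter (fun j : Fin n → ZMod 2 => ¬ parity j = 0)
      = Finset.univ.filter (fun j => parity j = 1) := by
    apply Finset.filter_congr
    intro j _
    rcases zmod2_cases (parity j) with h | h <;> simp [h]
  rw [hfil]
  have h0 : ∀ j ∈ Finset.univ.filter (fun j : Fin n → ZMod 2 => parity j = 0),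
      eps (parity j) • tens (fun l => projP (j l)) = tens (fun l => projP (j l)) := by
    intro j hj
    rw [(Finset.mem_filter.mp hj).2, eps_zero, one_smul]
  have h1 : ∀ j ∈ Finset.univ.filter (fun j : Fin n → ZMod 2 => parity j = 1),
      eps (parity j) • tens (fun l => projP (j l)) = -tens (fun l => projP (j l)) := by
    intro j hj
    rw [(Finset.mem_filter.mp hj).2, eps_one, neg_one_smul]
  rw [Finset.sum_congr rfl h0, Finset.sum_congr rfl h1, Finset.sum_neg_distrib, sub_eq_add_neg]

/-- `D(σ₀, σ₁) = (1/2) tr |σ₀ − σ₁| = (1/√2)^n`. -/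
theorem traceDist_sigma (n : ℕ) (hn : 1 ≤ n) :
    (1 / 2) * traceNorm (sigma n 0 - sigma n 1) = (1 / Real.sqrt 2) ^ n := by
  set X := sigma n 0 - sigma n 1 with hX
  set r : ℝ := (1 / 2 ^ (n - 1)) * (1 / Real.sqrt 2) ^ n with hr
  have hr0 : 0 ≤ r := by positivity
  have hsqrt2 : Real.sqrt 2 ^ 2 = 2 := Real.sq_sqrt (by norm_num)
  have hhalf : ((1 / Real.sqrt 2) ^ n) ^ 2 = (1 / 2 : ℝ) ^ n := by
    rw [← pow_mul, mul_comm, pow_mul, div_pow, hsqrt2, one_pow]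
  have hrsq : r ^ 2 = 1 / 2 ^ (n - 1) * (1 / 2 ^ (n - 1)) * (1 / 2) ^ n := by
    rw [hr, mul_pow, hhalf, sq]
  have hsq : ((r : ℂ) • (1 : Matrix (Fin n → ZMod 2) (Fin n → ZMod 2) ℂ)) ^ 2 = Xᴴ * X := by
    rw [hX, sigma_sub n, Matrix.conjTranspose_smul, tens_conjTranspose, smul_mul_smul_comm,
      tens_mul]
    have hD : (fun l : Fin n => (D)ᴴ * D) = fun _ => (1 / 2 : ℂ) • 1 := by
      funext l; rw [D_herm, D_mul_D]
    rw [hD, tens_smul_const, tens_one, smul_pow, one_pow, smul_smul]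
    congr 1
    have hstar : star (1 / 2 ^ (n - 1) : ℂ) = (1 / 2 ^ (n - 1) : ℂ) := by
      simp
    rw [hstar]
    have : ((r : ℂ)) ^ 2 = ((r ^ 2 : ℝ) : ℂ) := by push_cast; ring
    rw [this, hrsq]
    push_cast
    ring
  have hpsd : ((r : ℂ) • (1 : Matrix (Fin n → ZMod 2) (Fin n → ZMod 2) ℂ)).PosSemidef := by
    rw [Matrix.smul_one_eq_diagonal]
    exact Matrix.posSemidef_diagonal_iff.mpr fun i => by
      simpa using Complex.zero_le_real.mpr hr0
  have habs : matAbs X = (r : ℂ) • 1 := by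
    have hA := (Matrix.posSemidef_conjTranspose_mul_self X).1
    have hXX : Xᴴ * X = ((r : ℂ) ^ 2) • (1 : Matrix (Fin n → ZMod 2) (Fin n → ZMod 2) ℂ) := by
      rw [← hsq, smul_pow, one_pow]
    have hdiag := hA.conjStarAlgAut_star_eigenvectorUnitary
    rw [Unitary.conjStarAlgAut_star_apply] at hdiag
    set U := hA.eigenvectorUnitary with hU
    set ev := hA.eigenvalues with hev'
    rw [hXX, Matrix.mul_smul, Matrix.mul_one, Matrix.smul_mul,
      Unitary.coe_star_mul_self] at hdiag
    have hev : ∀ i, hA.eigenvalues i = r ^ 2 := by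
      intro i
      have h := congrFun (congrFun hdiag i) i
      simp only [Matrix.smul_apply, Matrix.one_apply_eq, Matrix.diagonal_apply_eq,
        Function.comp_apply, smul_eq_mul, mul_one] at h
      apply Complex.ofReal_injective
      rw [Complex.ofReal_pow]
      exact h.symm
    show hA.eigenvectorUnitary.1 * diagonal ((↑) ∘ (√·) ∘ hA.eigenvalues) *
      (star hA.eigenvectorUnitary : Matrix (Fin n → ZMod 2) (Fin n → ZMod 2) ℂ) = _
    have hd : diagonal (((↑) : ℝ → ℂ) ∘ (√·) ∘ hA.eigenvalues) = (r : ℂ) • 1 := by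
      rw [Matrix.smul_one_eq_diagonal]; congr 1; funext i
      simp [hev i, Real.sqrt_sq hr0]
    rw [hd, Matrix.mul_smul, Matrix.mul_one, Matrix.smul_mul,
      Matrix.mem_unitaryGroup_iff.mp hA.eigenvectorUnitary.2]
  have htr : traceNorm X = r * 2 ^ n := by
    rw [traceNorm, habs, Matrix.trace_smul, Matrix.trace_one]
    have hcard : (Fintype.card (Fin n → ZMod 2) : ℂ) = ((2 : ℝ) ^ n : ℝ) := by
      simp [Fintype.card_fun]
    rw [hcard, smul_eq_mul, ← Complex.ofReal_mul]
    exact Complex.ofReal_re _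
  rw [htr, hr]
  have h2 : (2 : ℝ) ^ n = 2 ^ (n - 1) * 2 := by
    rw [← pow_succ, Nat.sub_add_cancel hn]
  rw [h2]
  have hne : (2 : ℝ) ^ (n - 1) ≠ 0 := by positivity
  field_simp
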